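/- arXiv:2306.00148 — 2 statements merged into one kernel-verified Lean document; each statement's English description precedes it below -/
import Mathlib

section
/- Let b : ℝⁿ → ℝ be continuously differentiable and let x : ℝ → ℝⁿ be a continuously differentiable trajectory. Suppose α : ℝ → ℝ is a locally Lipschitz, strictly increasing function with α(0) = 0 (extended class K), and for all t ≥ 0, d/dt b(x(t)) + α(b(x(t))) ≥ 0. If b(x(0)) ≥ 0, then b(x(t)) ≥ 0 for all t ≥ 0. -/
theorem stmt_1 (n : ℕ) (b : EuclideanSpace ℝ (Fin n) → ℝ)
    (x : ℝ → EuclideanSpace ℝ (Fin n)) (α : ℝ → ℝ)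
    (hb : ContDiff ℝ 1 b) (hx : ContDiff ℝ 1 x)
    (hαlip : LocallyLipschitz α) (hαmono : StrictMono α) (hα0 : α 0 = 0)
    (hcbf : ∀ t : ℝ, 0 ≤ t → deriv (fun s => b (x s)) t + α (b (x t)) ≥ 0)
    (h0 : b (x 0) ≥ 0) :
    ∀ t : ℝ, 0 ≤ t → b (x t) ≥ 0 := by
  intro t ht
  by_contra hneg
  push_neg at hneg
  set h : ℝ → ℝ := fun s => b (x s) with hhdef
  have hh : ContDiff ℝ 1 h := hb.comp hx
  have hcont : Continuous h := hh.continuous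
  have hdiff : Differentiable ℝ h := hh.differentiable one_ne_zero
  set S : Set ℝ := Set.Icc 0 t ∩ {s | 0 ≤ h s} with hSdef
  have hS0 : (0:ℝ) ∈ S := ⟨⟨le_rfl, ht⟩, h0⟩
  have hSne : S.Nonempty := ⟨0, hS0⟩
  have hSbdd : BddAbove S := ⟨t, fun s hs => hs.1.2⟩
  have hSclosed : IsClosed S :=
    isClosed_Icc.inter (isClosed_le continuous_const hcont)
  set t₀ := sSup S with ht₀def
  have ht₀S : t₀ ∈ S := hSclosed.csSup_mem hSne hSbdd
  have ht₀0 : 0 ≤ t₀ := ht₀S.1.1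
  have ht₀t : t₀ ≤ t := ht₀S.1.2
  have ht₀h : 0 ≤ h t₀ := ht₀S.2
  have ht₀lt : t₀ < t := lt_of_le_of_ne ht₀t (by intro he; rw [he] at ht₀h; exact absurd ht₀h (not_le.2 hneg))
  have hIoc : ∀ s ∈ Set.Ioc t₀ t, h s < 0 := by
    intro s hs
    by_contra hsge
    push_neg at hsge
    have : s ∈ S := ⟨⟨ht₀0.trans hs.1.le, hs.2⟩, hsge⟩
    exact absurd (le_csSup hSbdd this) (not_le.2 hs.1)
  have hmono : StrictMonoOn h (Set.Icc t₀ t) := by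
    apply strictMonoOn_of_deriv_pos (convex_Icc t₀ t) (hcont.continuousOn)
    intro s hs
    rw [interior_Icc] at hs
    have hs0 : 0 ≤ s := ht₀0.trans hs.1.le
    have hneg' : h s < 0 := hIoc s ⟨hs.1, hs.2.le⟩
    have : α (h s) < 0 := by
      have := hαmono hneg'
      rwa [hα0] at this
    have hc := hcbf s hs0
    linarith
  have := hmono ⟨le_rfl, ht₀t⟩ ⟨ht₀t, le_rfl⟩ ht₀lt
  linarith
end

section
/- Let α : ℝ → ℝ be strictly increasing with α(0) = 0, and let b, x, and the trajectory satisfy ḃ(t) ≥ -α(b(t)) with b(0) = b₀ > 0. Then b(t) > 0 for all t ≥ 0, assuming α is locally Lipschitz. -/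
theorem stmt_12 (b α : ℝ → ℝ) (b₀ : ℝ)
    (hb : ContDiff ℝ 1 b)
    (hαlip : LocallyLipschitz α) (hαmono : StrictMono α) (hα0 : α 0 = 0)
    (hineq : ∀ t : ℝ, 0 ≤ t → deriv b t ≥ -α (b t))
    (hb0 : b 0 = b₀) (hb0pos : 0 < b₀) :
    ∀ t : ℝ, 0 ≤ t → 0 < b t := by
  have hbc : Continuous b := hb.continuous
  have hbd : Differentiable ℝ b := hb.differentiable one_ne_zero
  by_contra h
  push_neg at h
  obtain ⟨t₀, ht₀, hbt₀⟩ := h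
  -- the set of nonnegative zeros of b
  set S : Set ℝ := Set.Ici (0:ℝ) ∩ b ⁻¹' {0} with hSdef
  have hSclosed : IsClosed S :=
    isClosed_Ici.inter (isClosed_eq hbc continuous_const)
  have hSne : S.Nonempty := by
    have h0 : (0:ℝ) ∈ Set.Icc (b t₀) (b 0) := by
      constructor
      · exact hbt₀
      · rw [hb0]; exact hb0pos.le
    obtain ⟨s, hs, hbs⟩ := intermediate_value_Icc' ht₀ (hbc.continuousOn) h0
    exact ⟨s, hs.1, hbs⟩
  have hSbdd : BddBelow S := ⟨0, fun x hx => hx.1⟩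
  set T := sInf S with hT
  have hTS : T ∈ S := hSclosed.csInf_mem hSne hSbdd
  have hT0 : 0 ≤ T := hTS.1
  have hbT : b T = 0 := hTS.2
  have hTpos : 0 < T := by
    rcases hT0.lt_or_eq with h | h
    · exact h
    · exfalso; rw [← h, hb0] at hbT; linarith
  -- b is positive on [0, T)
  have hpos : ∀ t, 0 ≤ t → t < T → 0 < b t := by
    intro t ht htT
    by_contra hle
    push_neg at hle
    have h0 : (0:ℝ) ∈ Set.Icc (b t) (b 0) := by
      constructor
      · exact hle
      · rw [hb0]; exact hb0pos.le
    obtain ⟨s, hs, hbs⟩ := intermediate_value_Icc' ht (hbc.continuousOn) h0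
    have : T ≤ s := csInf_le hSbdd ⟨hs.1, hbs⟩
    linarith [hs.2]
  -- Lipschitz constant near 0
  obtain ⟨K, U, hU, hlip⟩ := hαlip 0
  obtain ⟨ε, hε, hball⟩ := Metric.mem_nhds_iff.mp hU
  have h0U : (0:ℝ) ∈ U := hball (Metric.mem_ball_self hε)
  -- continuity of b at T
  obtain ⟨δ, hδ, hδcont⟩ := Metric.continuousAt_iff.mp (hbc.continuousAt (x := T)) ε hε
  set t₁ : ℝ := max (T - δ/2) (T/2) with ht₁def
  have ht₁lt : t₁ < T := by
    apply max_lt <;> linarith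
  have ht₁pos : 0 < t₁ := lt_of_lt_of_le (by linarith) (le_max_right _ _)
  -- on [t₁, T], b is small
  have hsmall : ∀ t ∈ Set.Icc t₁ T, |b t| < ε := by
    intro t ht
    have h1 : T - δ/2 ≤ t := le_trans (le_max_left _ _) ht.1
    have h2 : dist t T < δ := by
      rw [Real.dist_eq, abs_lt]
      constructor <;> linarith [ht.2]
    have := hδcont h2
    rwa [Real.dist_eq, hbT, sub_zero] at this
  -- key pointwise bound: α (b t) ≤ K * b t on [t₁, T]
  have hkey : ∀ t ∈ Set.Icc t₁ T, α (b t) ≤ (K : ℝ) * b t := by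
    intro t ht
    have hbmem : b t ∈ U := hball (by
      simp [Metric.mem_ball, Real.dist_eq, hsmall t ht])
    have hbnn : 0 ≤ b t := by
      rcases ht.2.lt_or_eq with h | h
      · exact (hpos t (le_trans ht₁pos.le ht.1) h).le
      · rw [h, hbT]
    have := hlip.dist_le_mul (b t) hbmem 0 h0U
    rw [hα0, Real.dist_eq, Real.dist_eq, sub_zero, sub_zero] at this
    calc α (b t) ≤ |α (b t)| := le_abs_self _
      _ ≤ (K : ℝ) * |b t| := this
      _ = (K : ℝ) * b t := by rw [abs_of_nonneg hbnn]
  -- auxiliary function g t = b t * exp (K t)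
  set g : ℝ → ℝ := fun t => b t * Real.exp ((K : ℝ) * t) with hg
  have hgderiv : ∀ t : ℝ, HasDerivAt g
      ((deriv b t + (K : ℝ) * b t) * Real.exp ((K : ℝ) * t)) t := by
    intro t
    have h1 : HasDerivAt b (deriv b t) t := (hbd t).hasDerivAt
    have h2 : HasDerivAt (fun t : ℝ => Real.exp ((K : ℝ) * t))
        (Real.exp ((K : ℝ) * t) * (K : ℝ)) t := by
      have := ((hasDerivAt_id t).const_mul (K : ℝ)).exp
      simpa using this
    have : HasDerivAt (fun t : ℝ => b t * Real.exp ((K : ℝ) * t))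
        (deriv b t * Real.exp ((K : ℝ) * t) + b t * (Real.exp ((K : ℝ) * t) * (K : ℝ))) t :=
      h1.mul h2
    convert this using 1
    ring
  have hmono : MonotoneOn g (Set.Icc t₁ T) := by
    apply monotoneOn_of_deriv_nonneg (convex_Icc t₁ T)
    · exact (hbc.mul (Real.continuous_exp.comp (continuous_const.mul continuous_id))).continuousOn
    · intro t ht
      exact ((hgderiv t).differentiableAt).differentiableWithinAt
    · intro t ht
      rw [interior_Icc] at ht
      rw [(hgderiv t).deriv]
      have htmem : t ∈ Set.Icc t₁ T := ⟨ht.1.le, ht.2.le⟩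
      have h1 : deriv b t ≥ -α (b t) := hineq t (le_trans ht₁pos.le htmem.1)
      have h2 : α (b t) ≤ (K : ℝ) * b t := hkey t htmem
      have h3 : 0 < Real.exp ((K : ℝ) * t) := Real.exp_pos _
      nlinarith
  have hgle : g t₁ ≤ g T :=
    hmono (Set.left_mem_Icc.mpr ht₁lt.le) (Set.right_mem_Icc.mpr ht₁lt.le) ht₁lt.le
  have hgt₁ : 0 < g t₁ := by
    have : 0 < b t₁ := hpos t₁ ht₁pos.le ht₁lt
    exact mul_pos this (Real.exp_pos _)
  have hgT : g T = 0 := by simp [hg, hbT]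
  linarith
end
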